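/- For every n ≥ 3 there exists a ((3n)_4) point-circle configuration in the Euclidean plane with n-fold rotational symmetry: there exist 3n pairwise distinct points and 3n pairwise distinct circles (metric spheres of positive radius) in ℝ² such that every circle passes through exactly 4 of the points, every point lies on exactly 4 of the circles, and the set of points and the set of circles are each invariant under the rotation of the plane about a common center by angle 2π/n. -/

import Mathlib

open Metric

/-- Rotation of the Euclidean plane about the point `O` by angle `θ`. -/
noncomputable def rotAbout (O : EuclideanSpace ℝ (Fin 2)) (θ : ℝ) :
    EuclideanSpace ℝ (Fin 2) → EuclideanSpace ℝ (Fin 2) := fun x =>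
  (EuclideanSpace.equiv (Fin 2) ℝ).symm
    ![O 0 + Real.cos θ * (x 0 - O 0) - Real.sin θ * (x 1 - O 1),
      O 1 + Real.sin θ * (x 0 - O 0) + Real.cos θ * (x 1 - O 1)]

open Real Metric

namespace Cfg


noncomputable def ph (n : ℕ) : ℝ := Real.pi / n
noncomputable def c1 (n : ℕ) : ℝ := Real.cos (ph n)
noncomputable def c3 (n : ℕ) : ℝ := Real.cos (3 * ph n)
noncomputable def eps (n : ℕ) : ℝ := min (1/2) ((c1 n - c3 n) / (2 * c1 n - c3 n))
noncomputable def xx (n : ℕ) : ℝ := 1 - eps n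

variable {n : ℕ}

lemma nR_pos (hn : 3 ≤ n) : (0:ℝ) < n := by
  have : (3:ℝ) ≤ n := by exact_mod_cast hn
  linarith

lemma ph_pos (hn : 3 ≤ n) : 0 < ph n := div_pos Real.pi_pos (nR_pos hn)

lemma ph_le (hn : 3 ≤ n) : 3 * ph n ≤ π := by
  have h3 : (3:ℝ) ≤ n := by exact_mod_cast hn
  rw [ph, mul_div_assoc']
  rw [div_le_iff₀ (nR_pos hn)]
  nlinarith [Real.pi_pos]

lemma nph (hn : 3 ≤ n) : (n : ℝ) * ph n = π := by
  rw [ph]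
  field_simp

lemma c1_pos (hn : 3 ≤ n) : 0 < c1 n := by
  apply Real.cos_pos_of_mem_Ioo
  constructor
  · have := ph_pos hn; linarith [Real.pi_pos]
  · have := ph_pos hn; have := ph_le hn; linarith

lemma c1_le_one : c1 n ≤ 1 := Real.cos_le_one _

lemma c3_lt_c1 (hn : 3 ≤ n) : c3 n < c1 n := by
  have h1 := ph_pos hn
  have h2 := ph_le hn
  exact Real.strictAntiOn_cos ⟨le_of_lt h1, by linarith⟩ ⟨by linarith, h2⟩ (by linarith)

lemma denom_pos (hn : 3 ≤ n) : 0 < 2 * c1 n - c3 n := by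
  have := c3_lt_c1 hn; have := c1_pos hn; linarith

lemma eps_pos (hn : 3 ≤ n) : 0 < eps n := by
  apply lt_min (by norm_num)
  exact div_pos (by linarith [c3_lt_c1 hn]) (denom_pos hn)

lemma eps_le_half : eps n ≤ 1/2 := min_le_left _ _

lemma xx_lt_one (hn : 3 ≤ n) : xx n < 1 := by
  have := eps_pos hn; simp [xx]; linarith

lemma xx_ge_half : 1/2 ≤ xx n := by
  have := eps_le_half (n := n); simp [xx]; linarith

lemma xx_pos : 0 < xx n := lt_of_lt_of_le (by norm_num) xx_ge_half

lemma key_ineq (hn : 3 ≤ n) : c3 n * (xx n + 2) < c1 n * (1 + 2 * xx n) := by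
  have h1 := c3_lt_c1 hn
  have h2 := denom_pos hn
  have h3 : eps n ≤ (c1 n - c3 n) / (2 * c1 n - c3 n) := min_le_right _ _
  have h4 : eps n * (2 * c1 n - c3 n) ≤ c1 n - c3 n := by
    calc eps n * (2 * c1 n - c3 n) ≤ (c1 n - c3 n) / (2 * c1 n - c3 n) * (2 * c1 n - c3 n) :=
          mul_le_mul_of_nonneg_right h3 (le_of_lt h2)
      _ = c1 n - c3 n := by rw [div_mul_cancel₀ _ (ne_of_gt h2)]
  have hx : xx n = 1 - eps n := rfl
  nlinarith [eps_pos hn]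


lemma cos_shift (hn : 3 ≤ n) (x : ℝ) (l : ℤ) :
    Real.cos (x + (2 * (n:ℝ) * (l:ℝ)) * ph n) = Real.cos x := by
  have h : x + (2 * (n:ℝ) * l) * ph n = x + (l:ℤ) * (2 * π) := by
    rw [← nph hn]; push_cast; ring
  rw [h, Real.cos_add_int_mul_two_pi]

lemma int_mul_ph_inj (hn : 3 ≤ n) {j1 j2 : ℤ} (h : (j1:ℝ) * ph n = (j2:ℝ) * ph n) : j1 = j2 := by
  have hphne : ph n ≠ 0 := ne_of_gt (ph_pos hn)
  have := mul_right_cancel₀ hphne h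
  exact_mod_cast this

lemma cos_eq_c1_iff (hn : 3 ≤ n) (j : ℤ) :
    Real.cos ((j : ℝ) * ph n) = c1 n ↔ ∃ l : ℤ, j = 2 * n * l + 1 ∨ j = 2 * n * l - 1 := by
  rw [c1, show Real.cos (ph n) = Real.cos ((1:ℝ) * ph n) by rw [one_mul],
    Real.cos_eq_cos_iff]
  constructor
  · rintro ⟨k, hk | hk⟩
    · refine ⟨-k, Or.inl ?_⟩
      have h1 : ((1:ℤ):ℝ) * ph n = ((2 * n * k + j : ℤ):ℝ) * ph n := by
        push_cast
        linear_combination hk - 2*(k:ℝ)*(nph hn)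
      have := int_mul_ph_inj hn h1
      linear_combination -this
    · refine ⟨k, Or.inr ?_⟩
      have h1 : ((1:ℤ):ℝ) * ph n = ((2 * n * k - j : ℤ):ℝ) * ph n := by
        push_cast
        linear_combination hk - 2*(k:ℝ)*(nph hn)
      have := int_mul_ph_inj hn h1
      linear_combination this
  · rintro ⟨l, hl | hl⟩
    · refine ⟨-l, Or.inl ?_⟩
      push_cast [hl]
      linear_combination -2*(l:ℝ)*(nph hn)
    · refine ⟨l, Or.inr ?_⟩
      push_cast [hl]
      linear_combination 2*(l:ℝ)*(nph hn)

lemma cos_odd_cases (hn : 3 ≤ n) (j : ℤ) (hj : Odd j) :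
    Real.cos ((j : ℝ) * ph n) = c1 n ∨ Real.cos ((j : ℝ) * ph n) ≤ c3 n := by
  have h2n : (0:ℤ) < 2 * n := by positivity
  set q := j / (2 * (n:ℤ)) with hqdef
  set j0 := j % (2 * (n:ℤ)) with hj0def
  have hq : j = 2 * n * q + j0 := (Int.mul_ediv_add_emod j (2*n)).symm
  have hj00 : 0 ≤ j0 := Int.emod_nonneg j (by omega)
  have hj0lt : j0 < 2 * n := Int.emod_lt_of_pos j h2n
  have hfold : Real.cos ((j:ℝ) * ph n) = Real.cos ((j0:ℝ) * ph n) := by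
    have h : (j:ℝ) * ph n = (j0:ℝ) * ph n + (2 * (n:ℝ) * (q:ℝ)) * ph n := by
      have : (j:ℝ) = ((2 * (n:ℤ) * q + j0 : ℤ) : ℝ) := by exact_mod_cast congrArg Int.cast hq
      rw [this]; push_cast; ring
    rw [h, cos_shift hn]
  have hj0odd : ∃ s : ℤ, j0 = 2 * s + 1 := by
    obtain ⟨s, hs⟩ := hj
    exact ⟨s - n * q, by linear_combination hs - hq⟩
  rw [hfold]
  obtain ⟨r, hr⟩ := hj0odd
  by_cases h1 : j0 = 1
  · left; rw [h1]; push_cast; rw [one_mul]; rfl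
  by_cases h2 : j0 = 2 * n - 1
  · left
    rw [cos_eq_c1_iff hn j0]
    exact ⟨1, Or.inr (by omega)⟩
  have hj03 : 3 ≤ j0 := by omega
  have hj0le : j0 ≤ 2 * n - 3 := by omega
  right
  have hphp := ph_pos hn
  have hphl := ph_le hn
  rw [c3]
  by_cases hle : j0 ≤ n
  · apply Real.cos_le_cos_of_nonneg_of_le_pi
    · linarith
    · calc (j0 : ℝ) * ph n ≤ (n:ℝ) * ph n := by
            apply mul_le_mul_of_nonneg_right _ (le_of_lt hphp)
            exact_mod_cast hle
        _ = π := nph hn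
    · have h3 : (3:ℝ) ≤ (j0:ℝ) := by exact_mod_cast hj03
      nlinarith
  · have heq : Real.cos ((j0:ℝ) * ph n) = Real.cos (((2 * n - j0 : ℤ):ℝ) * ph n) := by
      have h : ((2 * (n:ℤ) - j0 : ℤ):ℝ) * ph n = -((j0:ℝ) * ph n) + (2 * (n:ℝ) * ((1:ℤ):ℝ)) * ph n := by
        push_cast; ring
      rw [h, cos_shift hn, Real.cos_neg]
    rw [heq]
    set j1 : ℤ := 2 * n - j0 with hj1
    have hj13 : 3 ≤ j1 := by omega
    have hj1le : j1 ≤ n := by omega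
    apply Real.cos_le_cos_of_nonneg_of_le_pi
    · linarith
    · calc (j1 : ℝ) * ph n ≤ (n:ℝ) * ph n := by
            apply mul_le_mul_of_nonneg_right _ (le_of_lt hphp)
            exact_mod_cast hj1le
        _ = π := nph hn
    · have h3 : (3:ℝ) ≤ (j1:ℝ) := by exact_mod_cast hj13
      nlinarith

lemma cos_le_c1 (hn : 3 ≤ n) (j : ℤ) (hj : Odd j) (hc : c3 n < c1 n) :
    Real.cos ((j : ℝ) * ph n) ≤ c1 n := by
  rcases cos_odd_cases hn j hj with h | h
  · exact le_of_eq h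
  · linarith


abbrev E2 := EuclideanSpace ℝ (Fin 2)

noncomputable def rho (n : ℕ) : Fin 3 → ℝ := ![xx n, 1, 2]
noncomputable def su (n : ℕ) : Fin 3 → ℝ := ![xx n + 1, 3, xx n + 2]
noncomputable def qu (n : ℕ) : Fin 3 → ℝ := ![xx n, 2, 2 * xx n]
noncomputable def dd (n : ℕ) (t : Fin 3) : ℝ := su n t / (2 * c1 n)
noncomputable def RR (n : ℕ) (t : Fin 3) : ℝ := Real.sqrt ((dd n t)^2 - qu n t)
def opp : Fin 3 → Fin 3 := ![2, 0, 1]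

noncomputable def mk2 (a b : ℝ) : E2 := (EuclideanSpace.equiv (Fin 2) ℝ).symm ![a, b]

lemma mk2_zero (a b : ℝ) : mk2 a b 0 = a := rfl
lemma mk2_one (a b : ℝ) : mk2 a b 1 = b := rfl

noncomputable def pt (n : ℕ) (a : Fin 3) (m : ℕ) : E2 :=
  mk2 (rho n a * Real.cos (2 * m * ph n)) (rho n a * Real.sin (2 * m * ph n))
noncomputable def ct (n : ℕ) (t : Fin 3) (k : ℕ) : E2 :=
  mk2 (dd n t * Real.cos ((2 * k + 1) * ph n)) (dd n t * Real.sin ((2 * k + 1) * ph n))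

variable {n : ℕ}

lemma rho_pos (hn : 3 ≤ n) (a : Fin 3) : 0 < rho n a := by
  fin_cases a <;> simp [rho] <;> first | exact xx_pos | norm_num

lemma su_pos (hn : 3 ≤ n) (t : Fin 3) : 0 < su n t := by
  fin_cases t <;> simp [su] <;> nlinarith [xx_pos (n := n)]

lemma dd_pos (hn : 3 ≤ n) (t : Fin 3) : 0 < dd n t :=
  div_pos (su_pos hn t) (by linarith [c1_pos hn])

lemma qu_lt_dd_sq (hn : 3 ≤ n) (t : Fin 3) : qu n t < (dd n t)^2 := by
  have h1 := c1_pos hn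
  have h2 := c1_le_one (n := n)
  have h4 : su n t ^ 2 / 4 ≤ (dd n t)^2 := by
    rw [dd, div_pow]
    rw [div_le_div_iff₀ (by norm_num) (by positivity)]
    have hc2 : c1 n ^ 2 ≤ 1 := by nlinarith
    nlinarith [sq_nonneg (su n t), hc2]
  have h5 : 4 * qu n t < su n t ^ 2 := by
    fin_cases t <;> simp [su, qu] <;> nlinarith [xx_pos (n := n), xx_lt_one hn]
  linarith
lemma RR_pos (hn : 3 ≤ n) (t : Fin 3) : 0 < RR n t :=
  Real.sqrt_pos.mpr (by linarith [qu_lt_dd_sq hn t])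

lemma RR_sq (hn : 3 ≤ n) (t : Fin 3) : RR n t ^ 2 = (dd n t)^2 - qu n t :=
  Real.sq_sqrt (by linarith [qu_lt_dd_sq hn t])

lemma mem_sphere_iff' (p c : E2) (r : ℝ) (hr : 0 ≤ r) :
    p ∈ sphere c r ↔ (p 0 - c 0)^2 + (p 1 - c 1)^2 = r^2 := by
  rw [mem_sphere, EuclideanSpace.dist_eq, Fin.sum_univ_two, Real.dist_eq, Real.dist_eq,
    sq_abs, sq_abs]
  constructor
  · intro h
    rw [← h, Real.sq_sqrt (by positivity)]
  · intro h
    rw [h, Real.sqrt_sq hr]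

lemma mem_iff_cos (hn : 3 ≤ n) (a t : Fin 3) (m k : ℕ) :
    pt n a m ∈ sphere (ct n t k) (RR n t) ↔
    Real.cos (((2 * (m:ℤ) - 2 * k - 1 : ℤ) : ℝ) * ph n)
      = (rho n a ^ 2 + qu n t) / (2 * rho n a * dd n t) := by
  have hρ := rho_pos hn a
  have hd := dd_pos hn t
  rw [mem_sphere_iff' _ _ _ (le_of_lt (RR_pos hn t))]
  rw [RR_sq hn t]
  set A := 2 * (m:ℝ) * ph n with hA
  set B := (2 * (k:ℝ) + 1) * ph n with hB
  have hAB : ((2 * (m:ℤ) - 2 * k - 1 : ℤ) : ℝ) * ph n = A - B := by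
    push_cast; ring
  rw [hAB, Real.cos_sub]
  have hpt0 : pt n a m 0 = rho n a * Real.cos A := rfl
  have hpt1 : pt n a m 1 = rho n a * Real.sin A := rfl
  have hct0 : ct n t k 0 = dd n t * Real.cos B := rfl
  have hct1 : ct n t k 1 = dd n t * Real.sin B := rfl
  rw [hpt0, hpt1, hct0, hct1]
  have hsA := Real.sin_sq_add_cos_sq A
  have hsB := Real.sin_sq_add_cos_sq B
  have hexp : (rho n a * Real.cos A - dd n t * Real.cos B)^2
      + (rho n a * Real.sin A - dd n t * Real.sin B)^2
      = rho n a ^2 + dd n t ^2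
        - 2 * rho n a * dd n t * (Real.cos A * Real.cos B + Real.sin A * Real.sin B) := by
    nlinarith [hsA, hsB]
  rw [hexp]
  rw [eq_div_iff (ne_of_gt (by nlinarith : (0:ℝ) < 2 * rho n a * dd n t))]
  constructor
  · intro h; linear_combination -h
  · intro h; linear_combination -h

set_option maxHeartbeats 1000000 in
lemma rhs_pair (hn : 3 ≤ n) {a t : Fin 3} (h : a ≠ opp t) :
    (rho n a ^ 2 + qu n t) / (2 * rho n a * dd n t) = c1 n := by
  have hx := xx_pos (n := n)
  have hc := c1_pos hn
  fin_cases a <;> fin_cases t <;>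
    simp only [Fin.zero_eta, Fin.mk_one, Fin.reduceFinMk] at h ⊢ <;>
    simp only [rho, qu, dd, su, opp, Matrix.cons_val_zero, Matrix.cons_val_one,
      Matrix.head_cons, Matrix.cons_val_two, Matrix.tail_cons, ne_eq] at h ⊢ <;>
    first
      | (exact absurd rfl h)
      | (exact absurd trivial h)
      | (field_simp; done)
      | (field_simp; ring)


lemma rho_def : ∀ n, rho n = ![xx n, 1, 2] := fun _ => rfl
lemma qu_def : ∀ n, qu n = ![xx n, 2, 2 * xx n] := fun _ => rfl
lemma dd_def : ∀ n t, dd n t = (![xx n + 1, 3, xx n + 2] t) / (2 * c1 n) := fun _ _ => rfl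
lemma pt0 : ∀ (n : ℕ) (a : Fin 3) (m : ℕ), pt n a m 0 = rho n a * Real.cos (2 * m * ph n) :=
  fun _ _ _ => rfl
lemma pt1 : ∀ (n : ℕ) (a : Fin 3) (m : ℕ), pt n a m 1 = rho n a * Real.sin (2 * m * ph n) :=
  fun _ _ _ => rfl
lemma ct0 : ∀ (n : ℕ) (t : Fin 3) (k : ℕ), ct n t k 0 = dd n t * Real.cos ((2 * k + 1) * ph n) :=
  fun _ _ _ => rfl
lemma ct1 : ∀ (n : ℕ) (t : Fin 3) (k : ℕ), ct n t k 1 = dd n t * Real.sin ((2 * k + 1) * ph n) :=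
  fun _ _ _ => rfl

-- the value for excluded ring never coincides with cos of an odd multiple
lemma rhs_opp_ne (hn : 3 ≤ n) (t : Fin 3) (j : ℤ) (hj : Odd j) :
    Real.cos ((j : ℝ) * ph n)
      ≠ (rho n (opp t) ^ 2 + qu n t) / (2 * rho n (opp t) * dd n t) := by
  have hx := xx_pos (n := n)
  have hx1 := xx_lt_one hn
  have hc := c1_pos hn
  have hc3 := c3_lt_c1 hn
  have hkey := key_ineq hn
  set V := (rho n (opp t) ^ 2 + qu n t) / (2 * rho n (opp t) * dd n t) with hV
  -- compute V per case
  have hcases : c1 n < V ∨ (c3 n < V ∧ V < c1 n) := by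
    fin_cases t
    -- t = 0 : opp t = 2, rho = 2, qu = xx, dd = (xx+1)/(2 c1) : V = (4+xx) c1 /(2 (xx+1))
    · left
      have hVeq : V = (4 + xx n) * c1 n / (2 * (xx n + 1)) := by
        simp only [hV]
        simp [rho_def, qu_def, dd_def, opp]
        field_simp
        ring
      rw [hVeq, lt_div_iff₀ (by positivity)]
      nlinarith [mul_pos hc (by linarith : (0:ℝ) < 2 - xx n)]
    -- t = 1 : opp t = 0, rho = xx, qu = 2, dd = 3/(2c1) : V = (xx^2+2) c1/(3 xx)
    · left
      have hVeq : V = (xx n ^ 2 + 2) * c1 n / (3 * xx n) := by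
        simp only [hV]
        simp [rho_def, qu_def, dd_def, opp]
        field_simp
      rw [hVeq, lt_div_iff₀ (by positivity)]
      nlinarith [mul_pos hc (mul_pos (by linarith : (0:ℝ) < 1 - xx n)
        (by linarith : (0:ℝ) < 2 - xx n))]
    -- t = 2 : opp t = 1, rho = 1, qu = 2 xx, dd = (xx+2)/(2c1) : V = (1+2xx) c1/(xx+2)
    · right
      have hVeq : V = (1 + 2 * xx n) * c1 n / (xx n + 2) := by
        simp only [hV]
        simp [rho_def, qu_def, dd_def, opp]
        field_simp
      rw [hVeq]
      constructor
      · rw [lt_div_iff₀ (by positivity)]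
        nlinarith
      · rw [div_lt_iff₀ (by positivity)]
        nlinarith [mul_pos hc (by linarith : (0:ℝ) < 1 - xx n)]
  rcases cos_odd_cases hn j hj with h | h
  · rcases hcases with h2 | ⟨h2, h3⟩ <;> intro hE <;> rw [h] at hE <;> linarith
  · rcases hcases with h2 | ⟨h2, h3⟩ <;> intro hE <;> rw [hE] at h <;> linarith

lemma cos_pair_iff [NeZero n] (hn : 3 ≤ n) (m k : Fin n) :
    Real.cos (((2 * (m.val:ℤ) - 2 * k.val - 1 : ℤ) : ℝ) * ph n) = c1 n ↔ (m = k ∨ m = k + 1) := by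
  rw [cos_eq_c1_iff hn]
  have hm := m.isLt
  have hk := k.isLt
  have hvadd : (k + 1 : Fin n).val = (k.val + 1) % n := by
    rw [Fin.add_def]
    congr 1
    simp [Fin.val_one', Nat.mod_eq_of_lt (show 1 < n by omega)]
  constructor
  · rintro ⟨l, hl | hl⟩
    · -- 2m - 2k - 1 = 2nl + 1, so m - k = nl + 1
      right
      have hmk : (m.val : ℤ) - k.val = n * l + 1 := by linarith
      have hl0 : l = 0 ∨ l = -1 := by
        rcases lt_trichotomy l 0 with h | h | h
        · right
          by_contra hne
          have : l ≤ -2 := by omega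
          have : (n:ℤ) * l ≤ (n:ℤ) * (-2) := by
            apply mul_le_mul_of_nonneg_left this (by positivity)
          omega
        · left; exact h
        · exfalso
          have : (n:ℤ) * 1 ≤ (n:ℤ) * l := by
            apply mul_le_mul_of_nonneg_left (by omega) (by positivity)
          omega
      apply Fin.ext
      rw [hvadd]
      rcases hl0 with rfl | rfl
      · rw [Nat.mod_eq_of_lt (by omega)]
        omega
      · have hkn : k.val + 1 = n := by omega
        rw [hkn, Nat.mod_self]
        omega
    · -- 2m - 2k - 1 = 2nl - 1, so m - k = nl
      left
      have hmk : (m.val : ℤ) - k.val = n * l := by linarith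
      have hl0 : l = 0 := by
        rcases lt_trichotomy l 0 with h | h | h
        · exfalso
          have : (n:ℤ) * l ≤ (n:ℤ) * (-1) := by
            apply mul_le_mul_of_nonneg_left (by omega) (by positivity)
          omega
        · exact h
        · exfalso
          have : (n:ℤ) * 1 ≤ (n:ℤ) * l := by
            apply mul_le_mul_of_nonneg_left (by omega) (by positivity)
          omega
      rw [hl0, mul_zero] at hmk
      apply Fin.ext
      omega
  · rintro (rfl | h)
    · exact ⟨0, Or.inr (by omega)⟩
    · have hmv : m.val = (k.val + 1) % n := by rw [h, hvadd]
      by_cases hlt : k.val + 1 < n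
      · rw [Nat.mod_eq_of_lt hlt] at hmv
        exact ⟨0, Or.inl (by omega)⟩
      · have hkn : k.val + 1 = n := by omega
        rw [hkn, Nat.mod_self] at hmv
        exact ⟨-1, Or.inl (by omega)⟩

lemma mem_iff [NeZero n] (hn : 3 ≤ n) (a t : Fin 3) (m k : Fin n) :
    pt n a m.val ∈ sphere (ct n t k.val) (RR n t) ↔ (a ≠ opp t ∧ (m = k ∨ m = k + 1)) := by
  rw [mem_iff_cos hn]
  by_cases h : a = opp t
  · subst h
    simp only [ne_eq, not_true_eq_false, false_and, iff_false]
    exact rhs_opp_ne hn t _ ⟨(m.val:ℤ) - k.val - 1, by ring⟩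
  · rw [rhs_pair hn h, cos_pair_iff hn]
    simp [h]


lemma e2_ext {x y : E2} (h0 : x 0 = y 0) (h1 : x 1 = y 1) : x = y := by
  ext i
  fin_cases i
  exacts [h0, h1]

lemma val_add_one [NeZero n] (hn : 3 ≤ n) (k : Fin n) : (k + 1).val = (k.val + 1) % n := by
  rw [Fin.add_def]
  congr 1
  simp [Fin.val_one', Nat.mod_eq_of_lt (show 1 < n by omega)]

lemma self_ne_add_one [NeZero n] (hn : 3 ≤ n) (k : Fin n) : k ≠ k + 1 := by
  intro h
  have hv := congrArg Fin.val h
  rw [val_add_one hn] at hv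
  have := k.isLt
  rcases Nat.lt_or_ge (k.val + 1) n with g | g
  · rw [Nat.mod_eq_of_lt g] at hv; omega
  · have h3 : k.val + 1 = n := by omega
    rw [h3, Nat.mod_self] at hv; omega

lemma succ_succ_absurd [NeZero n] (hn : 3 ≤ n) {k k' : Fin n}
    (h1 : k = k' + 1) (h2 : k' = k + 1) : False := by
  have hv1 := congrArg Fin.val h1
  have hv2 := congrArg Fin.val h2
  rw [val_add_one hn] at hv1 hv2
  have hk := k.isLt
  have hk' := k'.isLt
  rcases Nat.lt_or_ge (k'.val + 1) n with h | h
  · rw [Nat.mod_eq_of_lt h] at hv1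
    rcases Nat.lt_or_ge (k.val + 1) n with g | g
    · rw [Nat.mod_eq_of_lt g] at hv2; omega
    · have h3 : k.val + 1 = n := by omega
      rw [h3, Nat.mod_self] at hv2; omega
  · have h3 : k'.val + 1 = n := by omega
    rw [h3, Nat.mod_self] at hv1
    rcases Nat.lt_or_ge (k.val + 1) n with g | g
    · rw [Nat.mod_eq_of_lt g] at hv2; omega
    · have h4 : k.val + 1 = n := by omega
      rw [h4, Nat.mod_self] at hv2; omega

lemma nl_cases (hn : 3 ≤ n) {l d : ℤ} (h : d = n * l) (hlow : -(n:ℤ) < d) (hhigh : d < n) :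
    d = 0 := by
  rcases lt_trichotomy l 0 with hc | hc | hc
  · exfalso
    have h5 : (n:ℤ) * l ≤ (n:ℤ) * (-1) :=
      mul_le_mul_of_nonneg_left (by omega) (by positivity)
    have h5' : (n:ℤ) * l ≤ -(n:ℤ) := by linarith
    omega
  · rw [hc, mul_zero] at h; exact h
  · exfalso
    have h5 : (n:ℤ) * 1 ≤ (n:ℤ) * l :=
      mul_le_mul_of_nonneg_left (by omega) (by positivity)
    have h5' : (n:ℤ) ≤ (n:ℤ) * l := by linarith
    omega

-- injectivity of points
lemma pt_inj [NeZero n] (hn : 3 ≤ n) :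
    Function.Injective (fun q : Fin 3 × Fin n => pt n q.1 q.2.val) := by
  rintro ⟨a, m⟩ ⟨b, m'⟩ h
  simp only at h
  have h0 : pt n a m.val 0 = pt n b m'.val 0 := by rw [h]
  have h1 : pt n a m.val 1 = pt n b m'.val 1 := by rw [h]
  rw [pt0, pt0] at h0
  rw [pt1, pt1] at h1
  set A := 2 * (m.val:ℝ) * ph n with hA
  set B := 2 * (m'.val:ℝ) * ph n with hB
  have hpyA := Real.sin_sq_add_cos_sq A
  have hpyB := Real.sin_sq_add_cos_sq B
  have hρa := rho_pos hn a
  have hρb := rho_pos hn b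
  have hsq : rho n a ^ 2 = rho n b ^ 2 := by
    linear_combination (rho n a * Real.cos A + rho n b * Real.cos B) * h0
      + (rho n a * Real.sin A + rho n b * Real.sin B) * h1
      - rho n a ^ 2 * hpyA + rho n b ^ 2 * hpyB
  have hρ : rho n a = rho n b := by
    apply le_antisymm <;> nlinarith
  have hab : a = b := by
    have hx1 := xx_lt_one hn
    have hx2 := xx_ge_half (n := n)
    rw [rho_def] at hρ
    fin_cases a <;> fin_cases b <;> simp_all <;> linarith
  subst hab
  have hcos : Real.cos A = Real.cos B := by
    have := mul_left_cancel₀ (ne_of_gt hρa) h0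
    exact this
  have hsin : Real.sin A = Real.sin B := mul_left_cancel₀ (ne_of_gt hρa) h1
  have hone : Real.cos (A - B) = 1 := by
    rw [Real.cos_sub, hcos, hsin]
    nlinarith
  obtain ⟨l, hl⟩ := (Real.cos_eq_one_iff _).mp hone
  have hAB : ((2 * (m.val:ℤ) - 2 * m'.val : ℤ) : ℝ) * ph n = ((2 * (n:ℤ) * l : ℤ):ℝ) * ph n := by
    push_cast
    have : A - B = (2 * (m.val:ℝ) - 2 * m'.val) * ph n := by rw [hA, hB]; ring
    rw [this] at hl
    rw [← hl, ← nph hn]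
    ring
  have hint := int_mul_ph_inj hn hAB
  have hm := m.isLt
  have hm' := m'.isLt
  have hd : (m.val:ℤ) - m'.val = n * l := by linarith
  have hd0 : (m.val:ℤ) - m'.val = 0 := nl_cases hn hd (by omega) (by omega)
  have : m = m' := Fin.ext (by omega)
  rw [this]

lemma pt_add_n (hn : 3 ≤ n) (a : Fin 3) (m : ℕ) : pt n a (m + n) = pt n a m := by
  apply e2_ext
  · rw [pt0, pt0]
    congr 1
    have h : 2 * ((m + n : ℕ):ℝ) * ph n = 2 * (m:ℝ) * ph n + (1:ℤ) * (2 * π) := by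
      push_cast
      rw [← nph hn]
      ring
    rw [h, Real.cos_add_int_mul_two_pi]
  · rw [pt1, pt1]
    congr 1
    have h : 2 * ((m + n : ℕ):ℝ) * ph n = 2 * (m:ℝ) * ph n + 2 * π := by
      push_cast
      rw [← nph hn]
      ring
    rw [h, Real.sin_add_two_pi]

lemma ct_add_n (hn : 3 ≤ n) (t : Fin 3) (k : ℕ) : ct n t (k + n) = ct n t k := by
  apply e2_ext
  · rw [ct0, ct0]
    congr 1
    have h : (2 * ((k + n : ℕ):ℝ) + 1) * ph n = (2 * (k:ℝ) + 1) * ph n + (1:ℤ) * (2 * π) := by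
      push_cast
      rw [← nph hn]
      ring
    rw [h, Real.cos_add_int_mul_two_pi]
  · rw [ct1, ct1]
    congr 1
    have h : (2 * ((k + n : ℕ):ℝ) + 1) * ph n = (2 * (k:ℝ) + 1) * ph n + 2 * π := by
      push_cast
      rw [← nph hn]
      ring
    rw [h, Real.sin_add_two_pi]

lemma pt_val_succ [NeZero n] (hn : 3 ≤ n) (a : Fin 3) (m : Fin n) :
    pt n a (m.val + 1) = pt n a ((m + 1 : Fin n)).val := by
  rw [val_add_one hn]
  rcases Nat.lt_or_ge (m.val + 1) n with h | h
  · rw [Nat.mod_eq_of_lt h]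
  · have h3 : m.val + 1 = n := by omega
    rw [h3, Nat.mod_self]
    have := pt_add_n hn a 0
    rw [Nat.zero_add] at this
    exact this

lemma ct_val_succ [NeZero n] (hn : 3 ≤ n) (t : Fin 3) (k : Fin n) :
    ct n t (k.val + 1) = ct n t ((k + 1 : Fin n)).val := by
  rw [val_add_one hn]
  rcases Nat.lt_or_ge (k.val + 1) n with h | h
  · rw [Nat.mod_eq_of_lt h]
  · have h3 : k.val + 1 = n := by omega
    rw [h3, Nat.mod_self]
    have := ct_add_n hn t 0
    rw [Nat.zero_add] at this
    exact this

-- rotation lemmas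
lemma rot_apply0 (θ : ℝ) (x : E2) :
    rotAbout 0 θ x 0 = Real.cos θ * x 0 - Real.sin θ * x 1 := by
  simp [rotAbout]

lemma rot_apply1 (θ : ℝ) (x : E2) :
    rotAbout 0 θ x 1 = Real.sin θ * x 0 + Real.cos θ * x 1 := by
  simp [rotAbout]

lemma rot_dist (θ : ℝ) (x y : E2) :
    dist (rotAbout 0 θ x) (rotAbout 0 θ y) = dist x y := by
  rw [EuclideanSpace.dist_eq, EuclideanSpace.dist_eq]
  congr 1
  rw [Fin.sum_univ_two, Fin.sum_univ_two]
  rw [rot_apply0, rot_apply0, rot_apply1, rot_apply1, Real.dist_eq, Real.dist_eq,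
    Real.dist_eq, Real.dist_eq, sq_abs, sq_abs, sq_abs, sq_abs]
  have hpy := Real.sin_sq_add_cos_sq θ
  linear_combination ((x 0 - y 0)^2 + (x 1 - y 1)^2) * hpy

lemma rot_inv_right (θ : ℝ) (y : E2) : rotAbout 0 θ (rotAbout 0 (-θ) y) = y := by
  have hpy := Real.sin_sq_add_cos_sq θ
  apply e2_ext
  · rw [rot_apply0, rot_apply0, rot_apply1, Real.cos_neg, Real.sin_neg]
    linear_combination (y 0) * hpy
  · rw [rot_apply1, rot_apply0, rot_apply1, Real.cos_neg, Real.sin_neg]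
    linear_combination (y 1) * hpy

lemma rot_image_sphere (θ : ℝ) (c : E2) (r : ℝ) :
    rotAbout 0 θ '' sphere c r = sphere (rotAbout 0 θ c) r := by
  ext y
  constructor
  · rintro ⟨x, hx, rfl⟩
    rw [mem_sphere] at hx ⊢
    rw [rot_dist]
    exact hx
  · intro hy
    refine ⟨rotAbout 0 (-θ) y, ?_, rot_inv_right θ y⟩
    rw [mem_sphere] at hy ⊢
    rw [← rot_dist θ, rot_inv_right]
    exact hy

lemma theta_eq (hn : 3 ≤ n) : 2 * π / (n:ℝ) = 2 * ph n := by
  rw [← nph hn]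
  have hnne : (n:ℝ) ≠ 0 := by positivity
  field_simp

lemma rot_pt (hn : 3 ≤ n) (a : Fin 3) (m : ℕ) :
    rotAbout 0 (2 * π / n) (pt n a m) = pt n a (m + 1) := by
  apply e2_ext
  · rw [rot_apply0, pt0, pt1, pt0, theta_eq hn]
    have h : 2 * ((m + 1 : ℕ):ℝ) * ph n = 2 * (m:ℝ) * ph n + 2 * ph n := by
      push_cast; ring
    rw [h, Real.cos_add]
    ring
  · rw [rot_apply1, pt0, pt1, pt1, theta_eq hn]
    have h : 2 * ((m + 1 : ℕ):ℝ) * ph n = 2 * (m:ℝ) * ph n + 2 * ph n := by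
      push_cast; ring
    rw [h, Real.sin_add]
    ring

lemma rot_ct (hn : 3 ≤ n) (t : Fin 3) (k : ℕ) :
    rotAbout 0 (2 * π / n) (ct n t k) = ct n t (k + 1) := by
  apply e2_ext
  · rw [rot_apply0, ct0, ct1, ct0, theta_eq hn]
    have h : (2 * ((k + 1 : ℕ):ℝ) + 1) * ph n = (2 * (k:ℝ) + 1) * ph n + 2 * ph n := by
      push_cast; ring
    rw [h, Real.cos_add]
    ring
  · rw [rot_apply1, ct0, ct1, ct1, theta_eq hn]
    have h : (2 * ((k + 1 : ℕ):ℝ) + 1) * ph n = (2 * (k:ℝ) + 1) * ph n + 2 * ph n := by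
      push_cast; ring
    rw [h, Real.sin_add]
    ring


def oppi : Fin 3 → Fin 3 := ![1, 2, 0]

lemma opp_inj : Function.Injective opp := by decide

lemma ne_opp_self : ∀ s : Fin 3, s ≠ opp s := by decide

lemma ne_opp_iff : ∀ a t : Fin 3, (a ≠ opp t ↔ t ≠ oppi a) := by decide

lemma sphere_inj [NeZero n] (hn : 3 ≤ n) :
    Function.Injective
      (fun q : Fin 3 × Fin n => (sphere (ct n q.1 q.2.val) (RR n q.1) : Set E2)) := by
  rintro ⟨t, k⟩ ⟨t', k'⟩ h
  simp only at h
  have key : ∀ (a : Fin 3) (m : Fin n),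
      (a ≠ opp t ∧ (m = k ∨ m = k + 1)) ↔ (a ≠ opp t' ∧ (m = k' ∨ m = k' + 1)) := by
    intro a m
    rw [← mem_iff hn, ← mem_iff hn, h]
  have htt : t = t' := by
    by_contra hne
    have h1 : opp t' ≠ opp t := fun hc => hne (opp_inj hc).symm
    have h2 := (key (opp t') k).mp ⟨h1, Or.inl rfl⟩
    exact h2.1 rfl
  subst htt
  have h1 := (key t k).mp ⟨ne_opp_self t, Or.inl rfl⟩
  have h2 := (key t (k + 1)).mp ⟨ne_opp_self t, Or.inr rfl⟩
  have hkk : k = k' := by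
    rcases h1.2 with hk | hk
    · exact hk
    · rcases h2.2 with hk2 | hk2
      · exact (succ_succ_absurd hn hk hk2.symm).elim
      · exact add_right_cancel hk2
  rw [hkk]

lemma card_circle [NeZero n] (hn : 3 ≤ n) (t : Fin 3) (k : Fin n) :
    Nat.card {q : Fin 3 × Fin n //
      pt n q.1 q.2.val ∈ sphere (ct n t k.val) (RR n t)} = 4 := by
  have hiff : ∀ q : Fin 3 × Fin n,
      (pt n q.1 q.2.val ∈ sphere (ct n t k.val) (RR n t)) ↔
      q ∈ (Finset.univ.erase (opp t)) ×ˢ ({k, k + 1} : Finset (Fin n)) := by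
    rintro ⟨a, m⟩
    rw [mem_iff hn]
    simp [Finset.mem_product, Finset.mem_erase, Finset.mem_insert, and_comm]
  rw [Nat.card_congr (Equiv.subtypeEquivRight hiff), Nat.card_eq_finsetCard,
    Finset.card_product, Finset.card_erase_of_mem (Finset.mem_univ _),
    Finset.card_insert_of_notMem (by simp [self_ne_add_one hn k]), Finset.card_singleton]
  simp

lemma card_point [NeZero n] (hn : 3 ≤ n) (a : Fin 3) (m : Fin n) :
    Nat.card {q : Fin 3 × Fin n //
      pt n a m.val ∈ sphere (ct n q.1 q.2.val) (RR n q.1)} = 4 := by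
  have hmm : m ≠ m - 1 := by
    intro hm
    have : m + 1 = m := by
      conv_lhs => rw [hm]
      exact sub_add_cancel m 1
    exact self_ne_add_one hn m this.symm
  have hiff : ∀ q : Fin 3 × Fin n,
      (pt n a m.val ∈ sphere (ct n q.1 q.2.val) (RR n q.1)) ↔
      q ∈ (Finset.univ.erase (oppi a)) ×ˢ ({m, m - 1} : Finset (Fin n)) := by
    rintro ⟨t, k⟩
    rw [mem_iff hn]
    simp only [Finset.mem_product, Finset.mem_erase, Finset.mem_insert,
      Finset.mem_singleton, Finset.mem_univ, and_true]
    constructor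
    · rintro ⟨h1, h2 | h2⟩
      · exact ⟨(ne_opp_iff a t).mp h1, Or.inl h2.symm⟩
      · refine ⟨(ne_opp_iff a t).mp h1, Or.inr ?_⟩
        rw [h2]
        exact (add_sub_cancel_right k 1).symm
    · rintro ⟨h1, h2 | h2⟩
      · exact ⟨(ne_opp_iff a t).mpr h1, Or.inl h2.symm⟩
      · refine ⟨(ne_opp_iff a t).mpr h1, Or.inr ?_⟩
        rw [h2]
        exact (sub_add_cancel m 1).symm
  rw [Nat.card_congr (Equiv.subtypeEquivRight hiff), Nat.card_eq_finsetCard,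
    Finset.card_product, Finset.card_erase_of_mem (Finset.mem_univ _),
    Finset.card_insert_of_notMem (by simp [hmm]), Finset.card_singleton]
  simp


end Cfg

open Cfg in
/-- For every `n ≥ 3` there is a `((3n)_4)` point-circle configuration in the Euclidean
plane with `n`-fold rotational symmetry: `3n` distinct points and `3n` distinct circles
such that every circle passes through exactly 4 of the points, every point lies on
exactly 4 of the circles, and both the set of points and the set of circles are invariant
under the rotation about a common centre by angle `2π/n`. -/
theorem exists_3n_4_configuration_with_rotational_symmetry (n : ℕ) (hn : 3 ≤ n) :
    ∃ (O : EuclideanSpace ℝ (Fin 2))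
      (p : Fin (3 * n) → EuclideanSpace ℝ (Fin 2))
      (c : Fin (3 * n) → EuclideanSpace ℝ (Fin 2)) (r : Fin (3 * n) → ℝ),
      Function.Injective p ∧
      (∀ j, 0 < r j) ∧
      Function.Injective (fun j => sphere (c j) (r j)) ∧
      (∀ j, Nat.card {i : Fin (3 * n) // p i ∈ sphere (c j) (r j)} = 4) ∧
      (∀ i, Nat.card {j : Fin (3 * n) // p i ∈ sphere (c j) (r j)} = 4) ∧
      rotAbout O (2 * Real.pi / n) '' Set.range p = Set.range p ∧
      (Set.image (rotAbout O (2 * Real.pi / n))) ''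
          (Set.range fun j => sphere (c j) (r j))
        = Set.range fun j => sphere (c j) (r j) := by
  haveI : NeZero n := ⟨by omega⟩
  have e : Fin 3 × Fin n ≃ Fin (3 * n) := finProdFinEquiv
  set P : Fin 3 × Fin n → E2 := fun q => pt n q.1 q.2.val with hP
  set C : Fin 3 × Fin n → E2 := fun q => ct n q.1 q.2.val with hC
  set G : Fin 3 × Fin n → Set E2 := fun q => sphere (C q) (RR n q.1) with hG
  have σsurj : Function.Surjective (fun q : Fin 3 × Fin n => (q.1, q.2 + 1)) := by
    rintro ⟨t, k⟩
    exact ⟨(t, k - 1), by simp⟩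
  refine ⟨0, fun i => P (e.symm i), fun i => C (e.symm i), fun i => RR n (e.symm i).1,
    ?_, ?_, ?_, ?_, ?_, ?_, ?_⟩
  · intro i j hij
    exact e.symm.injective (pt_inj hn hij)
  · intro j
    exact RR_pos hn _
  · intro i j hij
    exact e.symm.injective (sphere_inj hn hij)
  · intro j
    rw [← card_circle hn (e.symm j).1 (e.symm j).2]
    exact Nat.card_congr (e.symm.subtypeEquiv (fun i => Iff.rfl))
  · intro i
    rw [← card_point hn (e.symm i).1 (e.symm i).2]
    exact Nat.card_congr (e.symm.subtypeEquiv (fun j => Iff.rfl))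
  · have hrange : Set.range (fun i => P (e.symm i)) = Set.range P :=
      Function.Surjective.range_comp e.symm.surjective P
    rw [hrange, ← Set.range_comp]
    have hcomp : (rotAbout 0 (2 * Real.pi / n)) ∘ P
        = P ∘ (fun q : Fin 3 × Fin n => (q.1, q.2 + 1)) := by
      funext q
      obtain ⟨a, m⟩ := q
      show rotAbout 0 (2 * Real.pi / n) (pt n a m.val) = pt n a ((m + 1 : Fin n)).val
      rw [rot_pt hn, pt_val_succ hn]
    rw [hcomp]
    exact Function.Surjective.range_comp σsurj P
  · have hrange : Set.range (fun i => (sphere (C (e.symm i)) (RR n (e.symm i).1) : Set E2))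
        = Set.range G :=
      Function.Surjective.range_comp e.symm.surjective G
    rw [hrange, ← Set.range_comp]
    have hcomp : (Set.image (rotAbout 0 (2 * Real.pi / n))) ∘ G
        = G ∘ (fun q : Fin 3 × Fin n => (q.1, q.2 + 1)) := by
      funext q
      obtain ⟨t, k⟩ := q
      show rotAbout 0 (2 * Real.pi / n) '' sphere (ct n t k.val) (RR n t)
        = sphere (ct n t ((k + 1 : Fin n)).val) (RR n t)
      rw [rot_image_sphere, rot_ct hn, ct_val_succ hn]
    rw [hcomp]
    exact Function.Surjective.range_comp σsurj G
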